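/- arXiv:1512.01956 — 5 statements merged into one kernel-verified Lean document; each statement's English description precedes it below -/
import Mathlib

section
/- Let p > 1 and u : ℝᴺ → ℝ with negative part u₋ = max(-u,0). Then for all x, y, one has −|u(x)−u(y)|^{p−2}(u(x)−u(y)) · (u₋(x)−u₋(y)) ≥ |u₋(x)−u₋(y)|^p. -/
theorem stmt_2 (N : ℕ) (p : ℝ) (hp : 1 < p)
    (u : EuclideanSpace ℝ (Fin N) → ℝ) :
    ∀ x y : EuclideanSpace ℝ (Fin N),
      -(|u x - u y| ^ (p - 2) * (u x - u y)) * (max (-u x) 0 - max (-u y) 0) ≥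
        |max (-u x) 0 - max (-u y) 0| ^ p := by
  intro x y
  set a := u x with ha
  set b := u y with hb
  set A := max (-a) 0 with hA
  set B := max (-b) 0 with hB
  have hAB : |A - B| ≤ |a - b| := by
    have h := abs_max_sub_max_le_abs (-a) (-b) 0
    calc |A - B| ≤ |(-a) - (-b)| := h
      _ = |a - b| := by rw [abs_sub_comm]; ring_nf
  have key : -((a - b) * (A - B)) = |a - b| * |A - B| := by
    rcases le_total a b with h | h
    · have hAge : B ≤ A := max_le_max (neg_le_neg h) le_rfl
      rw [abs_of_nonpos (sub_nonpos.2 h), abs_of_nonneg (sub_nonneg.2 hAge)]; ring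
    · have hAge : A ≤ B := max_le_max (neg_le_neg h) le_rfl
      rw [abs_of_nonneg (sub_nonneg.2 h), abs_of_nonpos (sub_nonpos.2 hAge)]; ring
  have h1 : -(|a - b| ^ (p - 2) * (a - b)) * (A - B)
      = |a - b| ^ (p - 2) * (|a - b| * |A - B|) := by rw [← key]; ring
  rw [ge_iff_le, h1]
  by_cases hab : a = b
  · have hABeq : A = B := by rw [hA, hB, hab]
    rw [hABeq, hab]
    simp [Real.zero_rpow (by linarith : p ≠ 0)]
  · have hpos : 0 < |a - b| := abs_pos.2 (sub_ne_zero.2 hab)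
    have h2 : |a - b| ^ (p - 2) * (|a - b| * |A - B|) = |a - b| ^ (p - 1) * |A - B| := by
      rw [show p - 1 = (p - 2) + 1 by ring, Real.rpow_add_one (ne_of_gt hpos)]; ring
    rw [h2]
    rcases eq_or_lt_of_le (abs_nonneg (A - B)) with hz | hz
    · rw [← hz, Real.zero_rpow (by linarith : p ≠ 0)]
      positivity
    · have h3 : |A - B| ^ p = |A - B| ^ (p - 1) * |A - B| := by
        rw [← Real.rpow_add_one (ne_of_gt hz) (p - 1)]
        norm_num
      rw [h3]
      have h4 : |A - B| ^ (p - 1) ≤ |a - b| ^ (p - 1) :=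
        Real.rpow_le_rpow (abs_nonneg _) hAB (by linarith)
      exact mul_le_mul_of_nonneg_right h4 (le_of_lt hz)
end

section
/- Let N > ps with s ∈ (0,1), p > 1, and let u ∈ L^{p*}(ℝᴺ) with p* = Np/(N−ps). Then lim_{δ→0⁺} δᴺ ∫_{|x|≥δ} |u(x)|^p / |x|^{N+ps} dx = 0. -/
open MeasureTheory Filter Set Module
set_option maxHeartbeats 1000000


lemma radial_lint (N : ℕ) (hN : 0 < N) (b : ℝ) (hb : (N:ℝ) < b) (δ : ℝ) (hδ : 0 < δ) :
    ∫⁻ x in {x : EuclideanSpace ℝ (Fin N) | δ ≤ ‖x‖}, ENNReal.ofReal (‖x‖ ^ (-b)) ∂volume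
      = ENNReal.ofReal ((N * (volume (Metric.ball (0:EuclideanSpace ℝ (Fin N)) 1)).toReal / (b - N))
          * δ ^ ((N:ℝ) - b)) := by
  haveI : Nontrivial (EuclideanSpace ℝ (Fin N)) := by
    refine ⟨EuclideanSpace.single ⟨0, hN⟩ 1, 0, fun h => ?_⟩
    have := congrArg (fun v => v ⟨0, hN⟩) h
    simpa using this
  set E := EuclideanSpace ℝ (Fin N)
  have hfr : finrank ℝ E = N := finrank_euclideanSpace_fin
  set S : Set E := {x : E | δ ≤ ‖x‖} with hSdef
  have hSm : MeasurableSet S := by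
    have : S = (fun x : E => ‖x‖) ⁻¹' Ici δ := rfl
    rw [this]; exact measurable_norm measurableSet_Ici
  have hmeas : Measurable fun x : E => ‖x‖ ^ (-b) := by fun_prop
  -- integrability on S
  have hint : IntegrableOn (fun x : E => ‖x‖ ^ (-b)) S volume := by
    have hJB : Integrable (fun x : E => (1 + ‖x‖) ^ (-b)) volume := by
      apply integrable_one_add_norm (μ := volume); rw [hfr]; exact hb
    have hc : (0:ℝ) < δ⁻¹ + 1 := by positivity
    refine Integrable.mono' ((hJB.const_mul ((δ⁻¹ + 1) ^ b)).restrict (s := S))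
      hmeas.aestronglyMeasurable ?_
    refine (ae_restrict_iff' hSm).2 (ae_of_all _ fun x hx => ?_)
    have hx' : δ ≤ ‖x‖ := hx
    have hxpos : (0:ℝ) < ‖x‖ := lt_of_lt_of_le hδ hx'
    have h1 : 1 + ‖x‖ ≤ (δ⁻¹ + 1) * ‖x‖ := by
      have : (1:ℝ) ≤ δ⁻¹ * ‖x‖ := by
        rw [← div_eq_inv_mul]; exact (one_le_div hδ).2 hx'
      nlinarith
    have h2 : ((δ⁻¹ + 1) * ‖x‖) ^ (-b) ≤ (1 + ‖x‖) ^ (-b) :=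
      Real.rpow_le_rpow_of_nonpos (by positivity) h1 (by linarith)
    rw [Real.norm_eq_abs, abs_of_nonneg (Real.rpow_nonneg hxpos.le _)]
    calc ‖x‖ ^ (-b) = (δ⁻¹ + 1) ^ b * (((δ⁻¹ + 1) * ‖x‖) ^ (-b)) := by
          rw [Real.mul_rpow hc.le hxpos.le, ← mul_assoc, ← Real.rpow_add hc]
          simp
      _ ≤ (δ⁻¹ + 1) ^ b * ((1 + ‖x‖) ^ (-b)) := by
          exact mul_le_mul_of_nonneg_left h2 (Real.rpow_nonneg hc.le _)
  -- value of the Bochner integral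
  have hval : ∫ x in S, ‖x‖ ^ (-b) ∂volume
      = (N * (volume (Metric.ball (0:E) 1)).toReal / (b - N)) * δ ^ ((N:ℝ) - b) := by
    have hind : ∀ x : E, S.indicator (fun x : E => ‖x‖ ^ (-b)) x
        = (fun y : ℝ => (Ici δ).indicator (fun y : ℝ => y ^ (-b)) y) ‖x‖ := by
      intro x
      simp only [indicator, mem_Ici, hSdef, mem_setOf_eq]
    calc ∫ x in S, ‖x‖ ^ (-b) ∂volume
        = ∫ x : E, S.indicator (fun x : E => ‖x‖ ^ (-b)) x ∂volume :=
          (integral_indicator hSm).symm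
      _ = ∫ x : E, (fun y : ℝ => (Ici δ).indicator (fun y : ℝ => y ^ (-b)) y) ‖x‖ ∂volume := by
          exact integral_congr_ae (ae_of_all _ hind)
      _ = finrank ℝ E • (volume (Metric.ball (0:E) 1)).toReal •
            ∫ y in Ioi (0:ℝ), y ^ (finrank ℝ E - 1) • (Ici δ).indicator (fun y : ℝ => y ^ (-b)) y :=
          integral_fun_norm_addHaar volume _
      _ = (N * (volume (Metric.ball (0:E) 1)).toReal / (b - N)) * δ ^ ((N:ℝ) - b) := by
          rw [hfr]
          have : ∫ y in Ioi (0:ℝ), y ^ (N - 1) • (Ici δ).indicator (fun y : ℝ => y ^ (-b)) y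
              = δ ^ ((N:ℝ) - b) / (b - N) := by
            have h1 : ∀ y : ℝ, y ^ (N - 1) • (Ici δ).indicator (fun y : ℝ => y ^ (-b)) y
                = (Ici δ).indicator (fun y : ℝ => y ^ (N - 1) * y ^ (-b)) y := by
              intro y
              by_cases hy : y ∈ Ici δ
              · rw [indicator_of_mem hy, indicator_of_mem hy]; simp
              · rw [indicator_of_notMem hy, indicator_of_notMem hy]; simp
            rw [integral_congr_ae (ae_of_all _ fun y => h1 y), setIntegral_indicator measurableSet_Ici]
            have hIoi : Ioi (0:ℝ) ∩ Ici δ = Ici δ :=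
              inter_eq_self_of_subset_right (fun y hy => lt_of_lt_of_le hδ hy)
            rw [hIoi, integral_Ici_eq_integral_Ioi]
            have h2 : ∀ y ∈ Ioi δ, y ^ (N - 1) * y ^ (-b) = y ^ ((N:ℝ) - 1 - b) := by
              intro y hy
              have hy0 : (0:ℝ) < y := lt_trans hδ hy
              rw [← Real.rpow_natCast y (N-1), ← Real.rpow_add hy0]
              congr 1
              rw [Nat.cast_sub hN, Nat.cast_one]; ring
            rw [setIntegral_congr_fun measurableSet_Ioi h2]
            have hlt : (N:ℝ) - 1 - b < -1 := by linarith
            rw [integral_Ioi_rpow_of_lt hlt hδ]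
            have : (N:ℝ) - 1 - b + 1 = (N:ℝ) - b := by ring
            rw [this]
            rw [neg_div, ← div_neg]
            congr 1; ring
          rw [this]
          simp only [smul_eq_mul, nsmul_eq_mul]
          ring
  rw [← ofReal_integral_eq_lintegral_ofReal hint
      ((ae_restrict_iff' hSm).2 (ae_of_all _ fun x _ => Real.rpow_nonneg (norm_nonneg x) _)), hval]

lemma holder_bound (N : ℕ) {p q q' a : ℝ} (hq : q.HolderConjugate q') (hp : 0 ≤ p)
    (v : EuclideanSpace ℝ (Fin N) → ℝ) (hv : Measurable v) (T : Set (EuclideanSpace ℝ (Fin N))) :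
    ∫⁻ x in T, (‖v x‖₊ : ENNReal) ^ p * ENNReal.ofReal (‖x‖ ^ (-a)) ∂volume
      ≤ (∫⁻ x in T, (‖v x‖₊ : ENNReal) ^ (p * q) ∂volume) ^ (1/q)
        * (∫⁻ x in T, ENNReal.ofReal (‖x‖ ^ (-(a * q'))) ∂volume) ^ (1/q') := by
  have hf : AEMeasurable (fun x : EuclideanSpace ℝ (Fin N) => (‖v x‖₊ : ENNReal) ^ p)
      (volume.restrict T) := by fun_prop
  have hg : AEMeasurable (fun x : EuclideanSpace ℝ (Fin N) => ENNReal.ofReal (‖x‖ ^ (-a)))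
      (volume.restrict T) := by fun_prop
  have := ENNReal.lintegral_mul_le_Lp_mul_Lq (volume.restrict T) hq hf hg
  refine le_trans this (le_of_eq ?_)
  congr 1
  · congr 1
    refine lintegral_congr fun x => ?_
    rw [← ENNReal.rpow_mul]
  · congr 1
    refine lintegral_congr fun x => ?_
    rw [ENNReal.ofReal_rpow_of_nonneg (Real.rpow_nonneg (norm_nonneg _) _) hq.symm.nonneg,
      ← Real.rpow_mul (norm_nonneg _)]
    ring_nf

theorem stmt_3 (N : ℕ) (s p : ℝ) (hp : 1 < p) (hs : s ∈ Ioo (0:ℝ) 1)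
    (hN : p * s < N) (u : EuclideanSpace ℝ (Fin N) → ℝ)
    (hu : MemLp u (ENNReal.ofReal (N * p / (N - p * s))) volume) :
    Tendsto
      (fun δ : ℝ => δ ^ (N : ℝ) *
        ∫ x in {x : EuclideanSpace ℝ (Fin N) | δ ≤ ‖x‖},
          |u x| ^ p / ‖x‖ ^ ((N : ℝ) + p * s))
      (nhdsWithin 0 (Ioi 0)) (nhds 0) := by
  haveI : Nontrivial (EuclideanSpace ℝ (Fin N)) := by
    have hN0' : 0 < N := by exact_mod_cast lt_trans (mul_pos (lt_trans one_pos hp) hs.1) hN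
    refine ⟨EuclideanSpace.single ⟨0, hN0'⟩ 1, 0, fun h => ?_⟩
    have := congrArg (fun w => w ⟨0, hN0'⟩) h
    simp at this
  have hps : 0 < p * s := mul_pos (lt_trans one_pos hp) hs.1
  have hn : (0:ℝ) < N := lt_trans hps hN
  have hN0 : 0 < N := by exact_mod_cast hn
  have hnps : (0:ℝ) < (N:ℝ) - p * s := by linarith
  set n : ℝ := (N:ℝ) with hndef
  set a : ℝ := n + p * s with hadef
  set q : ℝ := n / (n - p * s) with hqdef
  set q' : ℝ := n / (p * s) with hq'def
  set b : ℝ := a * q' with hbdef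
  set pstar : ℝ := n * p / (n - p * s) with hpstardef
  have hq : q.HolderConjugate q' := by
    rw [Real.holderConjugate_iff]
    constructor
    · rw [hqdef]
      rw [lt_div_iff₀ hnps]; linarith
    · rw [hqdef, hq'def]
      field_simp
      ring
  have hpq : p * q = pstar := by rw [hqdef, hpstardef]; field_simp
  have hb : n < b := by
    rw [hbdef, hadef, hq'def]
    have h1 : (n + p*s) * (n/(p*s)) = n*n/(p*s) + n := by
      have hs0 : s ≠ 0 := hs.1.ne'
      have hp0' : p ≠ 0 := (lt_trans one_pos hp).ne'
      field_simp
    have h2 : 0 < n*n/(p*s) := by positivity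
    rw [h1]; linarith
  have hnb : (n - b) * (1/q') = -n := by
    rw [hbdef, hq'def, hadef]
    have hs0 : s ≠ 0 := hs.1.ne'
    have hp0' : p ≠ 0 := (lt_trans one_pos hp).ne'
    field_simp
    ring
  have hp0 : (0:ℝ) ≤ p := le_of_lt (lt_trans one_pos hp)
  have hpstar_pos : 0 < pstar := by rw [hpstardef]; positivity
  -- measurable representative
  set v : EuclideanSpace ℝ (Fin N) → ℝ := hu.1.mk u with hvdef
  have hvm : Measurable v := hu.1.stronglyMeasurable_mk.measurable
  have huv : u =ᵐ[volume] v := hu.1.ae_eq_mk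
  have huv2 : MemLp v (ENNReal.ofReal (N * p / (N - p * s))) volume := hu.ae_eq huv
  -- total integral of |v|^pstar
  have hIu : ∫⁻ x, (‖v x‖₊ : ENNReal) ^ pstar ∂volume < ⊤ := by
    have h1 : ENNReal.ofReal (↑N * p / (↑N - p * s)) ≠ 0 := by
      refine (ENNReal.ofReal_pos.2 ?_).ne'
      exact hpstar_pos
    have h2 : ENNReal.ofReal (↑N * p / (↑N - p * s)) ≠ ⊤ := ENNReal.ofReal_ne_top
    have := lintegral_rpow_enorm_lt_top_of_eLpNorm_lt_top h1 h2 huv2.2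
    rwa [ENNReal.toReal_ofReal (le_of_lt hpstar_pos)] at this
  -- the constant from the radial integral
  set c₀ : ℝ := N * (volume (Metric.ball (0:EuclideanSpace ℝ (Fin N)) 1)).toReal / (b - N) with hc₀def
  have hc₀ : 0 ≤ c₀ := by
    rw [hc₀def]
    have : (0:ℝ) ≤ (volume (Metric.ball (0:EuclideanSpace ℝ (Fin N)) 1)).toReal := ENNReal.toReal_nonneg
    have hbn : (0:ℝ) < b - N := by rw [← hndef]; linarith
    positivity
  set Kc : ℝ := c₀ ^ (1/q') with hKcdef
  have hKc : 0 ≤ Kc := Real.rpow_nonneg hc₀ _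
  -- pointwise identity
  have hpt : ∀ x : EuclideanSpace ℝ (Fin N), ENNReal.ofReal (|v x| ^ p / ‖x‖ ^ a)
      = (‖v x‖₊ : ENNReal) ^ p * ENNReal.ofReal (‖x‖ ^ (-a)) := by
    intro x
    rw [div_eq_mul_inv, ← Real.rpow_neg (norm_nonneg x),
      ENNReal.ofReal_mul (by positivity), ← enorm_eq_nnnorm, Real.enorm_eq_ofReal_abs,
      ENNReal.ofReal_rpow_of_nonneg (abs_nonneg _) hp0]
  -- the set lintegral
  set Lam : Set (EuclideanSpace ℝ (Fin N)) → ENNReal := fun T => ∫⁻ x in T, ENNReal.ofReal (|v x| ^ p / ‖x‖ ^ a) ∂volume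
    with hLamdef
  -- Hölder estimate for subsets of the tail
  have key : ∀ δ : ℝ, 0 < δ → ∀ T : Set (EuclideanSpace ℝ (Fin N)), T ⊆ {x : EuclideanSpace ℝ (Fin N) | δ ≤ ‖x‖} →
      Lam T ≤ (∫⁻ x in T, (‖v x‖₊ : ENNReal) ^ pstar ∂volume) ^ (1/q)
        * ENNReal.ofReal (c₀ * δ ^ (n - b)) ^ (1/q') := by
    intro δ hδ T hT
    have h1 : Lam T ≤ (∫⁻ x in T, (‖v x‖₊ : ENNReal) ^ (p*q) ∂volume) ^ (1/q)
        * (∫⁻ x in T, ENNReal.ofReal (‖x‖ ^ (-(a * q'))) ∂volume) ^ (1/q') := by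
      rw [hLamdef]
      simp only [hpt]
      exact holder_bound N hq hp0 v hvm T
    rw [hpq] at h1
    refine le_trans h1 (mul_le_mul' le_rfl ?_)
    refine ENNReal.rpow_le_rpow ?_ (by positivity)
    have h2 : (∫⁻ x in T, ENNReal.ofReal (‖x‖ ^ (-(a * q'))) ∂volume)
        ≤ ∫⁻ x in {x : EuclideanSpace ℝ (Fin N) | δ ≤ ‖x‖}, ENNReal.ofReal (‖x‖ ^ (-(a*q'))) ∂volume :=
      lintegral_mono_set hT
    rw [← hbdef] at h2
    rw [radial_lint N hN0 b hb δ hδ] at h2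
    exact le_trans h2 (le_of_eq (by rw [hc₀def, hndef]))
  -- finiteness of Lam on tails
  have hfin : ∀ δ : ℝ, 0 < δ → Lam {x : EuclideanSpace ℝ (Fin N) | δ ≤ ‖x‖} < ⊤ := by
    intro δ hδ
    refine lt_of_le_of_lt (key δ hδ _ (subset_refl _)) ?_
    apply ENNReal.mul_lt_top
    · refine ENNReal.rpow_lt_top_of_nonneg (by positivity) ?_
      exact (lt_of_le_of_lt (setLIntegral_le_lintegral _ _) hIu).ne
    · exact ENNReal.rpow_lt_top_of_nonneg (by positivity) ENNReal.ofReal_ne_top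
  -- rewrite the Bochner integral
  have hrw : ∀ δ : ℝ, (∫ x in {x : EuclideanSpace ℝ (Fin N) | δ ≤ ‖x‖}, |u x| ^ p / ‖x‖ ^ ((N:ℝ) + p * s) ∂volume)
      = (Lam {x : EuclideanSpace ℝ (Fin N) | δ ≤ ‖x‖}).toReal := by
    intro δ
    have h1 : (∫ x in {x : EuclideanSpace ℝ (Fin N) | δ ≤ ‖x‖}, |u x| ^ p / ‖x‖ ^ ((N:ℝ) + p * s) ∂volume)
        = ∫ x in {x : EuclideanSpace ℝ (Fin N) | δ ≤ ‖x‖}, |v x| ^ p / ‖x‖ ^ a ∂volume := by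
      refine integral_congr_ae (ae_restrict_of_ae ?_)
      filter_upwards [huv] with x hx
      rw [hx, hadef, hndef]
    rw [h1, hLamdef]
    refine integral_eq_lintegral_of_nonneg_ae (ae_of_all _ fun x => by positivity) ?_
    apply Measurable.aestronglyMeasurable
    fun_prop
  -- convergence of small balls
  have hball : Tendsto (fun k : ℕ => ∫⁻ x in Metric.closedBall (0:EuclideanSpace ℝ (Fin N)) (1/(k+1)),
      (‖v x‖₊ : ENNReal) ^ pstar ∂volume) atTop (nhds 0) := by
    set m : Measure (EuclideanSpace ℝ (Fin N)) := volume.withDensity (fun x => (‖v x‖₊ : ENNReal) ^ pstar) with hmdef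
    have hmeq : ∀ r : ℝ, m (Metric.closedBall (0:EuclideanSpace ℝ (Fin N)) r)
        = ∫⁻ x in Metric.closedBall (0:EuclideanSpace ℝ (Fin N)) r, (‖v x‖₊ : ENNReal) ^ pstar ∂volume := by
      intro r
      rw [hmdef, withDensity_apply _ measurableSet_closedBall]
    have h0 : m {(0:EuclideanSpace ℝ (Fin N))} = 0 := by
      rw [hmdef, withDensity_apply _ (measurableSet_singleton _)]
      rw [Measure.restrict_eq_zero.2 (measure_singleton _), lintegral_zero_measure]
    have hiInter : (⋂ k : ℕ, Metric.closedBall (0:EuclideanSpace ℝ (Fin N)) (1/(k+1))) = {(0:EuclideanSpace ℝ (Fin N))} := by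
      ext x
      simp only [mem_iInter, Metric.mem_closedBall, dist_zero_right, mem_singleton_iff]
      constructor
      · intro h
        by_contra hx
        have hx' : 0 < ‖x‖ := norm_pos_iff.2 hx
        obtain ⟨k, hk⟩ := exists_nat_gt (1/‖x‖)
        have := h k
        have h1k : 1/((k:ℝ)+1) < ‖x‖ := by
          rw [div_lt_iff₀ (by positivity)]
          rw [div_lt_iff₀ hx'] at hk
          nlinarith
        linarith
      · intro h; subst h; intro k; simp; positivity
    have := tendsto_measure_iInter_atTop (μ := m) (s := fun k : ℕ => Metric.closedBall (0:EuclideanSpace ℝ (Fin N)) (1/((k:ℝ)+1)))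
      (fun k => measurableSet_closedBall.nullMeasurableSet)
      (fun i j hij => Metric.closedBall_subset_closedBall (by
        apply div_le_div_of_nonneg_left one_pos.le (by positivity)
        exact add_le_add_left (Nat.cast_le.2 hij) 1)) ⟨0, by
        rw [hmeq]
        exact (lt_of_le_of_lt (setLIntegral_le_lintegral _ _) hIu).ne⟩
    rw [hiInter, h0] at this
    refine this.congr fun k => ?_
    simp only [Function.comp_apply]
    exact hmeq _
  -- main argument
  rw [NormedAddCommGroup.tendsto_nhds_zero]
  intro ε hε
  set ε₁ : ℝ := ε / (2 * (Kc + 1)) with hε₁def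
  have hε₁ : 0 < ε₁ := by rw [hε₁def]; positivity
  -- pick η
  have hev : ∀ᶠ k : ℕ in atTop, (∫⁻ x in Metric.closedBall (0:EuclideanSpace ℝ (Fin N)) (1/(k+1)),
      (‖v x‖₊ : ENNReal) ^ pstar ∂volume) < ENNReal.ofReal (ε₁ ^ q) := by
    refine hball.eventually_lt_const ?_
    exact ENNReal.ofReal_pos.2 (Real.rpow_pos_of_pos hε₁ _)
  obtain ⟨k, hk⟩ := hev.exists
  set η : ℝ := 1/((k:ℝ)+1) with hηdef
  have hη : 0 < η := by rw [hηdef]; positivity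
  set ν : ENNReal := ∫⁻ x in Metric.closedBall (0:EuclideanSpace ℝ (Fin N)) η, (‖v x‖₊ : ENNReal) ^ pstar ∂volume
    with hνdef
  have hν : ν < ENNReal.ofReal (ε₁ ^ q) := hk
  have hνfin : ν ≠ ⊤ := (lt_of_le_of_lt (setLIntegral_le_lintegral _ _) hIu).ne
  have hνtr : ν.toReal < ε₁ ^ q := ENNReal.toReal_lt_of_lt_ofReal hν
  have hνtr1q : ν.toReal ^ (1/q) < ε₁ := by
    have h1 : ν.toReal ^ (1/q) < (ε₁ ^ q) ^ (1/q) := by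
      apply Real.rpow_lt_rpow ENNReal.toReal_nonneg hνtr
      positivity
    rwa [← Real.rpow_mul hε₁.le, mul_one_div, div_self hq.pos.ne', Real.rpow_one] at h1
  -- tail term
  set Y : ENNReal := Lam {x : EuclideanSpace ℝ (Fin N) | η < ‖x‖} with hYdef
  have hYfin : Y ≠ ⊤ := by
    refine (lt_of_le_of_lt (lintegral_mono_set ?_) (hfin η hη)).ne
    exact fun x hx => mem_setOf.2 (le_of_lt (mem_setOf.1 hx))
  set Ytr : ℝ := Y.toReal with hYtrdef
  -- eventual smallness of the tail part
  have htend : Tendsto (fun δ : ℝ => δ ^ (N:ℝ) * Ytr) (nhdsWithin 0 (Ioi 0)) (nhds 0) := by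
    have h1 : Tendsto (fun δ : ℝ => δ ^ (N:ℝ)) (nhds 0) (nhds 0) := by
      have h2 := (continuous_pow N).tendsto (0:ℝ)
      rw [zero_pow hN0.ne'] at h2
      exact h2.congr fun δ => (Real.rpow_natCast δ N).symm
    have h3 := Tendsto.mul_const (x := nhdsWithin (0:ℝ) (Ioi 0)) Ytr (h1.mono_left nhdsWithin_le_nhds)
    rwa [zero_mul] at h3
  have hev2 : ∀ᶠ δ in nhdsWithin (0:ℝ) (Ioi 0), δ ^ (N:ℝ) * Ytr < ε/2 :=
    htend.eventually_lt_const (half_pos hε)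
  filter_upwards [self_mem_nhdsWithin, hev2, Ioo_mem_nhdsGT_of_mem ⟨le_refl (0:ℝ), hη⟩]
    with δ hδ0 hsmall hδIo
  have hδpos : (0:ℝ) < δ := hδ0
  set Sδ : Set (EuclideanSpace ℝ (Fin N)) := {x : EuclideanSpace ℝ (Fin N) | δ ≤ ‖x‖} with hSδdef
  set B : Set (EuclideanSpace ℝ (Fin N)) := Metric.closedBall (0:EuclideanSpace ℝ (Fin N)) η
    with hBdef
  have hsub : Sδ ⊆ (Sδ ∩ B) ∪ {x : EuclideanSpace ℝ (Fin N) | η < ‖x‖} := by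
    intro x hx
    by_cases hxη : ‖x‖ ≤ η
    · left
      exact ⟨hx, by simpa [hBdef, Metric.mem_closedBall, dist_zero_right] using hxη⟩
    · right
      exact lt_of_not_ge hxη
  have hXle : Lam (Sδ ∩ B) ≤ ν ^ (1/q) * ENNReal.ofReal (c₀ * δ ^ (n - b)) ^ (1/q') := by
    refine le_trans (key δ hδpos _ inter_subset_left) ?_
    refine mul_le_mul' (ENNReal.rpow_le_rpow ?_ (by positivity)) le_rfl
    refine lintegral_mono_set ?_
    intro x hx
    simpa [hBdef, Metric.mem_closedBall, dist_zero_right] using hx.2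
  have hXfin : Lam (Sδ ∩ B) ≠ ⊤ :=
    (lt_of_le_of_lt (lintegral_mono_set inter_subset_left) (hfin δ hδpos)).ne
  have hsplit : Lam Sδ ≤ Lam (Sδ ∩ B) + Y :=
    le_trans (lintegral_mono_set hsub) (lintegral_union_le _ _ _)
  have h5 : (Lam Sδ).toReal ≤ (Lam (Sδ ∩ B)).toReal + Ytr := by
    have h5' := ENNReal.toReal_mono (ENNReal.add_ne_top.2 ⟨hXfin, hYfin⟩) hsplit
    rwa [ENNReal.toReal_add hXfin hYfin] at h5'
  have hcd : (0:ℝ) ≤ c₀ * δ ^ (n - b) := by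
    have := Real.rpow_nonneg hδpos.le (n - b)
    positivity
  have h6 : (Lam (Sδ ∩ B)).toReal ≤ ν.toReal ^ (1/q) * (c₀ * δ ^ (n - b)) ^ (1/q') := by
    have hfin2 : ν ^ (1/q) * ENNReal.ofReal (c₀ * δ ^ (n - b)) ^ (1/q') ≠ ⊤ := by
      apply ENNReal.mul_ne_top
      · exact (ENNReal.rpow_lt_top_of_nonneg (by positivity) hνfin).ne
      · exact (ENNReal.rpow_lt_top_of_nonneg (by positivity) ENNReal.ofReal_ne_top).ne
    have h6' := ENNReal.toReal_mono hfin2 hXle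
    rwa [ENNReal.toReal_mul, ← ENNReal.toReal_rpow, ← ENNReal.toReal_rpow,
      ENNReal.toReal_ofReal hcd] at h6'
  have h7 : (c₀ * δ ^ (n - b)) ^ (1/q') = Kc * δ ^ (-n) := by
    rw [Real.mul_rpow hc₀ (Real.rpow_nonneg hδpos.le _), ← Real.rpow_mul hδpos.le, hnb, hKcdef]
  have hδn : (0:ℝ) ≤ δ ^ (N:ℝ) := Real.rpow_nonneg hδpos.le _
  have hδnn : δ ^ (N:ℝ) * δ ^ (-n) = 1 := by
    rw [hndef, ← Real.rpow_add hδpos, add_neg_cancel, Real.rpow_zero]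
  have hKcε : (Kc + 1) * ε₁ = ε/2 := by
    rw [hε₁def]; field_simp
  have hfirst : δ ^ (N:ℝ) * (Lam (Sδ ∩ B)).toReal < ε/2 := by
    have c1 : δ ^ (N:ℝ) * (Lam (Sδ ∩ B)).toReal
        ≤ δ ^ (N:ℝ) * (ν.toReal ^ (1/q) * (Kc * δ ^ (-n))) := by
      rw [← h7]; exact mul_le_mul_of_nonneg_left h6 hδn
    have c2 : δ ^ (N:ℝ) * (ν.toReal ^ (1/q) * (Kc * δ ^ (-n)))
        = Kc * ν.toReal ^ (1/q) * (δ ^ (N:ℝ) * δ ^ (-n)) := by ring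
    have c3 : Kc * ν.toReal ^ (1/q) ≤ Kc * ε₁ := mul_le_mul_of_nonneg_left hνtr1q.le hKc
    have c4 : Kc * ε₁ < (Kc + 1) * ε₁ := by nlinarith
    rw [c2, hδnn, mul_one] at c1
    linarith
  rw [Real.norm_eq_abs, hrw δ]
  rw [abs_of_nonneg (mul_nonneg hδn ENNReal.toReal_nonneg)]
  calc δ ^ (N:ℝ) * (Lam Sδ).toReal
      ≤ δ ^ (N:ℝ) * ((Lam (Sδ ∩ B)).toReal + Ytr) := mul_le_mul_of_nonneg_left h5 hδn
    _ = δ ^ (N:ℝ) * (Lam (Sδ ∩ B)).toReal + δ ^ (N:ℝ) * Ytr := mul_add _ _ _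
    _ < ε/2 + ε/2 := add_lt_add hfirst hsmall
    _ = ε := add_halves ε
end

section
/- Let p ≤ q and u ∈ W^{s,p}_0(Ω) be a weak solution of (−Δ_p)^s u = |u|^{q−2}u with u₊ ≠ 0. Then [u₊]_{s,p}^p ≤ ∫_Ω u₊^q dx, with strict inequality if also u₋ ≠ 0. -/
open MeasureTheory Filter Set

noncomputable def gagliardo (N : ℕ) (s p : ℝ) (u : EuclideanSpace ℝ (Fin N) → ℝ) : ℝ :=
  ∫ x, ∫ y, |u x - u y| ^ p / ‖x - y‖ ^ ((N : ℝ) + p * s)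

def gagliardoFinite (N : ℕ) (s p : ℝ) (u : EuclideanSpace ℝ (Fin N) → ℝ) : Prop :=
  (∫⁻ x, ∫⁻ y, ENNReal.ofReal (|u x - u y| ^ p / ‖x - y‖ ^ ((N : ℝ) + p * s))) ≠ ⊤

def memW (N : ℕ) (s p : ℝ) (Ω : Set (EuclideanSpace ℝ (Fin N)))
    (u : EuclideanSpace ℝ (Fin N) → ℝ) : Prop :=
  AEStronglyMeasurable u volume ∧ gagliardoFinite N s p u ∧ ∀ x ∉ Ω, u x = 0

def nontrivial' (N : ℕ) (u : EuclideanSpace ℝ (Fin N) → ℝ) : Prop :=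
  ¬ u =ᵐ[(volume : Measure (EuclideanSpace ℝ (Fin N)))] 0

/-- `t^{p-1} := |t|^{p-2} t`. -/
noncomputable def sgnPow (p t : ℝ) : ℝ := |t| ^ (p - 2) * t

/-- weak solution of `(-Δ_p)^s u = |u|^{q-2} u` in `Ω`, `u = 0` outside `Ω`. -/
def isWeakSolution (N : ℕ) (s p q : ℝ) (Ω : Set (EuclideanSpace ℝ (Fin N)))
    (u : EuclideanSpace ℝ (Fin N) → ℝ) : Prop :=
  memW N s p Ω u ∧
    ∀ φ : EuclideanSpace ℝ (Fin N) → ℝ, memW N s p Ω φ →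
      (∫ x, ∫ y, sgnPow p (u x - u y) * (φ x - φ y) / ‖x - y‖ ^ ((N : ℝ) + p * s)) =
        ∫ x in Ω, |u x| ^ (q - 2) * u x * φ x

/-! ### Auxiliary pointwise lemmas -/

lemma sgnPow_neg' (p t : ℝ) : sgnPow p (-t) = - sgnPow p t := by
  simp [sgnPow, abs_neg, mul_neg]

lemma max_sub_max_nonneg {a b : ℝ} (hab : b ≤ a) : 0 ≤ max a 0 - max b 0 :=
  sub_nonneg.2 (max_le_max hab le_rfl)

lemma lower_aux {p a b : ℝ} (hp : 1 < p) (hab : b ≤ a) :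
    |max a 0 - max b 0| ^ p ≤ sgnPow p (a - b) * (max a 0 - max b 0) := by
  set c : ℝ := max a 0 - max b 0 with hcdef
  have hc0 : 0 ≤ c := max_sub_max_nonneg hab
  have hcle : c ≤ a - b := by
    have h := abs_max_sub_max_le_abs a b 0
    rwa [← hcdef, abs_of_nonneg hc0, abs_of_nonneg (sub_nonneg.2 hab)] at h
  rcases hc0.eq_or_lt with h0 | h0
  · rw [← h0, abs_zero, Real.zero_rpow (by linarith), mul_zero]
  · have ht : (0:ℝ) < a - b := lt_of_lt_of_le h0 hcle
    have hsg : sgnPow p (a - b) = (a - b) ^ (p - 1) := by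
      rw [sgnPow, abs_of_pos ht, ← Real.rpow_add_one ht.ne' (p - 2)]
      congr 1
      ring
    have hcp : c ^ p = c ^ (p - 1) * c := by
      rw [← Real.rpow_add_one h0.ne' (p - 1)]
      congr 1
      ring
    rw [hsg, abs_of_nonneg hc0, hcp]
    exact mul_le_mul_of_nonneg_right (Real.rpow_le_rpow hc0 hcle (by linarith)) hc0

lemma lower_ineq {p : ℝ} (hp : 1 < p) (a b : ℝ) :
    |max a 0 - max b 0| ^ p ≤ sgnPow p (a - b) * (max a 0 - max b 0) := by
  rcases le_total b a with h | h
  · exact lower_aux hp h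
  · have h1 := lower_aux hp h
    have h2 : sgnPow p (b - a) * (max b 0 - max a 0)
        = sgnPow p (a - b) * (max a 0 - max b 0) := by
      rw [show b - a = -(a - b) by ring, sgnPow_neg',
        show max b 0 - max a 0 = -(max a 0 - max b 0) by ring]
      ring
    rwa [abs_sub_comm, h2] at h1

lemma upper_ineq {p : ℝ} (hp : 1 < p) (a b : ℝ) :
    sgnPow p (a - b) * (max a 0 - max b 0) ≤ |a - b| ^ p := by
  set t : ℝ := a - b
  set c : ℝ := max a 0 - max b 0
  have hcle : |c| ≤ |t| := abs_max_sub_max_le_abs a b 0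
  rcases eq_or_ne t 0 with ht | ht
  · rw [sgnPow, ht, mul_zero, zero_mul, abs_zero, Real.zero_rpow (by linarith)]
  · have habs : (0:ℝ) < |t| := abs_pos.2 ht
    have key : |t| ^ (p - 2) * t * c ≤ |t| ^ (p - 2) * (|t| * |t|) := by
      have h1 : t * c ≤ |t| * |c| := by
        calc t * c ≤ |t * c| := le_abs_self _
        _ = |t| * |c| := abs_mul t c
      have h2 : |t| * |c| ≤ |t| * |t| :=
        mul_le_mul_of_nonneg_left hcle (abs_nonneg t)
      calc |t| ^ (p - 2) * t * c = |t| ^ (p - 2) * (t * c) := by ring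
      _ ≤ |t| ^ (p - 2) * (|t| * |c|) :=
          mul_le_mul_of_nonneg_left h1 (Real.rpow_nonneg (abs_nonneg t) _)
      _ ≤ |t| ^ (p - 2) * (|t| * |t|) :=
          mul_le_mul_of_nonneg_left h2 (Real.rpow_nonneg (abs_nonneg t) _)
    have heq : |t| ^ (p - 2) * (|t| * |t|) = |t| ^ p := by
      rw [show |t| ^ (p-2) * (|t| * |t|) = |t| ^ (p-2) * |t| * |t| by ring,
        ← Real.rpow_add_one habs.ne' (p - 2), ← Real.rpow_add_one habs.ne' (p - 2 + 1)]
      congr 1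
      ring
    rw [sgnPow]
    exact key.trans_eq heq

lemma strict_ineq {p a b : ℝ} (hp : 1 < p) (ha : 0 < a) (hb : b < 0) :
    |max a 0 - max b 0| ^ p < sgnPow p (a - b) * (max a 0 - max b 0) := by
  have hma : max a 0 = a := max_eq_left ha.le
  have hmb : max b 0 = 0 := max_eq_right hb.le
  have ht : (0:ℝ) < a - b := by linarith
  have hsg : sgnPow p (a - b) = (a - b) ^ (p - 1) := by
    rw [sgnPow, abs_of_pos ht, ← Real.rpow_add_one ht.ne' (p - 2)]
    congr 1
    ring
  have hap : a ^ p = a ^ (p - 1) * a := by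
    rw [← Real.rpow_add_one ha.ne' (p - 1)]
    congr 1
    ring
  rw [hma, hmb, sub_zero, hsg, abs_of_pos ha, hap]
  exact mul_lt_mul_of_pos_right
    (Real.rpow_lt_rpow ha.le (by linarith) (by linarith)) ha

lemma div_mono_nonneg {x y c : ℝ} (h : x ≤ y) (hc : 0 ≤ c) : x / c ≤ y / c := by
  rw [div_eq_mul_inv, div_eq_mul_inv]
  exact mul_le_mul_of_nonneg_right h (inv_nonneg.2 hc)

lemma q_pointwise {q : ℝ} (hq : 1 < q) (t : ℝ) :
    |t| ^ (q - 2) * t * max t 0 = max t 0 ^ q := by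
  rcases le_or_gt t 0 with ht | ht
  · rw [max_eq_right ht, mul_zero, Real.zero_rpow (by linarith)]
  · have h1 : t ^ (q - 2) * t = t ^ (q - 1) := by
      rw [← Real.rpow_add_one ht.ne' (q - 2)]
      congr 1
      ring
    have h2 : t ^ (q - 1) * t = t ^ q := by
      rw [← Real.rpow_add_one ht.ne' (q - 1)]
      congr 1
      ring
    rw [max_eq_left ht.le, abs_of_pos ht, h1, h2]

theorem stmt_10 (N : ℕ) (s p q : ℝ) (hp : 1 < p) (hpq : p ≤ q) (hs : s ∈ Ioo (0:ℝ) 1)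
    (hN : p * s < N) (Ω : Set (EuclideanSpace ℝ (Fin N))) (hΩ : IsOpen Ω)
    (u : EuclideanSpace ℝ (Fin N) → ℝ)
    (hu : isWeakSolution N s p q Ω u)
    (hpos : nontrivial' N (fun x => max (u x) 0)) :
    gagliardo N s p (fun x => max (u x) 0) ≤ (∫ x in Ω, (max (u x) 0) ^ q) ∧
      (nontrivial' N (fun x => max (-u x) 0) →
        gagliardo N s p (fun x => max (u x) 0) < ∫ x in Ω, (max (u x) 0) ^ q) := by
  classical
  obtain ⟨⟨hmeas, hfin, hzero⟩, hweak⟩ := hu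
  set μ : Measure (EuclideanSpace ℝ (Fin N)) := volume with hμdef
  set κ : ℝ := (N : ℝ) + p * s with hκ
  set v : EuclideanSpace ℝ (Fin N) → ℝ := fun x => max (u x) 0 with hv
  have habs : ∀ x y : EuclideanSpace ℝ (Fin N), |v x - v y| ≤ |u x - u y| := fun x y =>
    abs_max_sub_max_le_abs (u x) (u y) 0
  have hq1 : 1 < q := lt_of_lt_of_le hp hpq
  have hvmeas : AEStronglyMeasurable v μ := by
    rw [hv]
    exact (hmeas.aemeasurable.max (aemeasurable_const (b := (0:ℝ)))).aestronglyMeasurable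
  have hvW : memW N s p Ω v := by
    refine ⟨hvmeas, ?_, fun x hx => by simp [hv, hzero x hx]⟩
    have hmono : (∫⁻ x, ∫⁻ y, ENNReal.ofReal (|v x - v y| ^ p / ‖x - y‖ ^ κ) ∂μ ∂μ)
        ≤ ∫⁻ x, ∫⁻ y, ENNReal.ofReal (|u x - u y| ^ p / ‖x - y‖ ^ κ) ∂μ ∂μ := by
      refine lintegral_mono fun x => lintegral_mono fun y => ENNReal.ofReal_le_ofReal ?_
      exact div_mono_nonneg
        (Real.rpow_le_rpow (abs_nonneg _) (habs x y) (by linarith))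
        (Real.rpow_nonneg (norm_nonneg _) _)
    exact fun h => hfin (top_le_iff.1 (h ▸ hmono))
  -- measurability on the product
  have hU1 : AEMeasurable (fun z : EuclideanSpace ℝ (Fin N) × EuclideanSpace ℝ (Fin N) =>
      u z.1) (μ.prod μ) :=
    hmeas.aemeasurable.comp_quasiMeasurePreserving Measure.quasiMeasurePreserving_fst
  have hU2 : AEMeasurable (fun z : EuclideanSpace ℝ (Fin N) × EuclideanSpace ℝ (Fin N) =>
      u z.2) (μ.prod μ) :=
    hmeas.aemeasurable.comp_quasiMeasurePreserving Measure.quasiMeasurePreserving_snd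
  have hV1 : AEMeasurable (fun z : EuclideanSpace ℝ (Fin N) × EuclideanSpace ℝ (Fin N) =>
      v z.1) (μ.prod μ) := hU1.max (aemeasurable_const (b := (0:ℝ)))
  have hV2 : AEMeasurable (fun z : EuclideanSpace ℝ (Fin N) × EuclideanSpace ℝ (Fin N) =>
      v z.2) (μ.prod μ) := hU2.max (aemeasurable_const (b := (0:ℝ)))
  have hK : Measurable (fun z : EuclideanSpace ℝ (Fin N) × EuclideanSpace ℝ (Fin N) =>
      ‖z.1 - z.2‖ ^ κ) :=
    (measurable_fst.sub measurable_snd).norm.pow measurable_const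
  have habs_meas : ∀ (w : EuclideanSpace ℝ (Fin N) × EuclideanSpace ℝ (Fin N) → ℝ),
      AEMeasurable w (μ.prod μ) → AEMeasurable (fun z => |w z|) (μ.prod μ) := by
    intro w hw
    simpa [Real.norm_eq_abs] using hw.norm
  have hFm : AEMeasurable (fun z : EuclideanSpace ℝ (Fin N) × EuclideanSpace ℝ (Fin N) =>
      |u z.1 - u z.2| ^ p / ‖z.1 - z.2‖ ^ κ) (μ.prod μ) :=
    ((habs_meas _ (hU1.sub hU2)).pow aemeasurable_const).div hK.aemeasurable
  have hfm : AEMeasurable (fun z : EuclideanSpace ℝ (Fin N) × EuclideanSpace ℝ (Fin N) =>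
      |v z.1 - v z.2| ^ p / ‖z.1 - z.2‖ ^ κ) (μ.prod μ) :=
    ((habs_meas _ (hV1.sub hV2)).pow aemeasurable_const).div hK.aemeasurable
  have hgm : AEMeasurable (fun z : EuclideanSpace ℝ (Fin N) × EuclideanSpace ℝ (Fin N) =>
      sgnPow p (u z.1 - u z.2) * (v z.1 - v z.2) / ‖z.1 - z.2‖ ^ κ) (μ.prod μ) := by
    have h1 : AEMeasurable (fun z : EuclideanSpace ℝ (Fin N) × EuclideanSpace ℝ (Fin N) =>
        sgnPow p (u z.1 - u z.2)) (μ.prod μ) := by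
      simp only [sgnPow]
      exact ((habs_meas _ (hU1.sub hU2)).pow aemeasurable_const).mul (hU1.sub hU2)
    exact (h1.mul (hV1.sub hV2)).div hK.aemeasurable
  -- finiteness of the dominating integral on the product
  have hFlint : (∫⁻ z, ENNReal.ofReal (|u z.1 - u z.2| ^ p / ‖z.1 - z.2‖ ^ κ) ∂(μ.prod μ))
      ≠ ⊤ := by
    rw [lintegral_prod _ hFm.ennreal_ofReal]
    exact hfin
  -- pointwise inequalities
  have hf_nonneg : ∀ z : EuclideanSpace ℝ (Fin N) × EuclideanSpace ℝ (Fin N),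
      0 ≤ |v z.1 - v z.2| ^ p / ‖z.1 - z.2‖ ^ κ := fun z =>
    div_nonneg (Real.rpow_nonneg (abs_nonneg _) _) (Real.rpow_nonneg (norm_nonneg _) _)
  have hfg : ∀ z : EuclideanSpace ℝ (Fin N) × EuclideanSpace ℝ (Fin N),
      |v z.1 - v z.2| ^ p / ‖z.1 - z.2‖ ^ κ
      ≤ sgnPow p (u z.1 - u z.2) * (v z.1 - v z.2) / ‖z.1 - z.2‖ ^ κ := fun z =>
    div_mono_nonneg (lower_ineq hp (u z.1) (u z.2)) (Real.rpow_nonneg (norm_nonneg _) _)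
  have hgF : ∀ z : EuclideanSpace ℝ (Fin N) × EuclideanSpace ℝ (Fin N),
      sgnPow p (u z.1 - u z.2) * (v z.1 - v z.2) / ‖z.1 - z.2‖ ^ κ
      ≤ |u z.1 - u z.2| ^ p / ‖z.1 - z.2‖ ^ κ := fun z =>
    div_mono_nonneg (upper_ineq hp (u z.1) (u z.2)) (Real.rpow_nonneg (norm_nonneg _) _)
  -- integrability
  have key_int : ∀ (h : EuclideanSpace ℝ (Fin N) × EuclideanSpace ℝ (Fin N) → ℝ),
      AEMeasurable h (μ.prod μ) → (∀ z, 0 ≤ h z) →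
      (∀ z, h z ≤ |u z.1 - u z.2| ^ p / ‖z.1 - z.2‖ ^ κ) → Integrable h (μ.prod μ) := by
    intro h hm h0 hle
    refine ⟨hm.aestronglyMeasurable, ?_⟩
    refine lt_of_le_of_lt ?_ (lt_top_iff_ne_top.2 hFlint)
    have : (∫⁻ z, ‖h z‖₊ ∂(μ.prod μ)) = ∫⁻ z, ENNReal.ofReal (h z) ∂(μ.prod μ) :=
      lintegral_congr fun z => Real.enorm_eq_ofReal (h0 z)
    calc (∫⁻ z, ‖h z‖₊ ∂(μ.prod μ))
        = ∫⁻ z, ENNReal.ofReal (h z) ∂(μ.prod μ) := this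
    _ ≤ ∫⁻ z, ENNReal.ofReal (|u z.1 - u z.2| ^ p / ‖z.1 - z.2‖ ^ κ) ∂(μ.prod μ) :=
          lintegral_mono fun z => ENNReal.ofReal_le_ofReal (hle z)
  have hIf : Integrable (fun z : EuclideanSpace ℝ (Fin N) × EuclideanSpace ℝ (Fin N) =>
      |v z.1 - v z.2| ^ p / ‖z.1 - z.2‖ ^ κ) (μ.prod μ) :=
    key_int _ hfm hf_nonneg (fun z => (hfg z).trans (hgF z))
  have hIg : Integrable (fun z : EuclideanSpace ℝ (Fin N) × EuclideanSpace ℝ (Fin N) =>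
      sgnPow p (u z.1 - u z.2) * (v z.1 - v z.2) / ‖z.1 - z.2‖ ^ κ) (μ.prod μ) :=
    key_int _ hgm (fun z => (hf_nonneg z).trans (hfg z)) hgF
  -- relate iterated integrals to product integrals
  have hfit : gagliardo N s p v
      = ∫ z, |v z.1 - v z.2| ^ p / ‖z.1 - z.2‖ ^ κ ∂(μ.prod μ) :=
    integral_integral (f := fun x y => |v x - v y| ^ p / ‖x - y‖ ^ κ) hIf
  have hgit : (∫ x, ∫ y, sgnPow p (u x - u y) * (v x - v y) / ‖x - y‖ ^ κ ∂μ ∂μ)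
      = ∫ z, sgnPow p (u z.1 - u z.2) * (v z.1 - v z.2) / ‖z.1 - z.2‖ ^ κ ∂(μ.prod μ) :=
    integral_integral
      (f := fun x y => sgnPow p (u x - u y) * (v x - v y) / ‖x - y‖ ^ κ) hIg
  -- use the weak formulation with φ = v
  have hkey := hweak v hvW
  have hrhs : (∫ x in Ω, |u x| ^ (q - 2) * u x * v x ∂μ) = ∫ x in Ω, v x ^ q ∂μ := by
    refine integral_congr_ae (Filter.Eventually.of_forall fun x => ?_)
    exact q_pointwise hq1 (u x)
  rw [hrhs, hgit] at hkey
  -- the main inequality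
  have hle : gagliardo N s p v ≤ ∫ x in Ω, v x ^ q ∂μ := by
    rw [hfit, ← hkey]
    exact integral_mono hIf hIg fun z => hfg z
  refine ⟨hle, ?_⟩
  -- strict inequality
  intro hneg
  obtain ⟨u', hu'm, huu'⟩ := hmeas.aemeasurable
  have hE : μ {x | u x ≠ u' x} = 0 := by
    exact ae_iff.1 huu'
  have hApos : 0 < μ {x | 0 < u' x} := by
    by_contra h
    push_neg at h
    have h0 : μ {x | 0 < u' x} = 0 := le_antisymm h zero_le
    apply hpos
    have hae : ∀ᵐ x ∂μ, ¬ (0 < u' x) := by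
      rw [ae_iff]; simpa using h0
    filter_upwards [huu', hae] with x hx1 hx2
    simp only [Pi.zero_apply, hv]
    rw [hx1]
    exact max_eq_right (not_lt.1 hx2)
  have hBpos : 0 < μ {x | u' x < 0} := by
    by_contra h
    push_neg at h
    have h0 : μ {x | u' x < 0} = 0 := le_antisymm h zero_le
    apply hneg
    have hae : ∀ᵐ x ∂μ, ¬ (u' x < 0) := by
      rw [ae_iff]; simpa using h0
    filter_upwards [huu', hae] with x hx1 hx2
    simp only [Pi.zero_apply]
    have hle0 : -u x ≤ 0 := by
      rw [hx1]; linarith [not_lt.1 hx2]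
    exact max_eq_right hle0
  -- the bad set is null
  have hE1 : (μ.prod μ) ({x | u x ≠ u' x} ×ˢ (univ : Set (EuclideanSpace ℝ (Fin N)))) = 0 := by
    rw [Measure.prod_prod, hE, zero_mul]
  have hE2 : (μ.prod μ) ((univ : Set (EuclideanSpace ℝ (Fin N))) ×ˢ {x | u x ≠ u' x}) = 0 := by
    rw [Measure.prod_prod, hE, mul_zero]
  set S : Set (EuclideanSpace ℝ (Fin N) × EuclideanSpace ℝ (Fin N)) :=
    ({x | 0 < u' x} ×ˢ {x | u' x < 0}) \
      (({x | u x ≠ u' x} ×ˢ (univ : Set (EuclideanSpace ℝ (Fin N)))) ∪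
        ((univ : Set (EuclideanSpace ℝ (Fin N))) ×ˢ {x | u x ≠ u' x}))
    with hSdef
  have hSpos : 0 < (μ.prod μ) S := by
    rw [hSdef, measure_diff_null (measure_union_null hE1 hE2), Measure.prod_prod]
    exact ENNReal.mul_pos hApos.ne' hBpos.ne'
  -- the difference function
  set d : EuclideanSpace ℝ (Fin N) × EuclideanSpace ℝ (Fin N) → ℝ := fun z =>
    sgnPow p (u z.1 - u z.2) * (v z.1 - v z.2) / ‖z.1 - z.2‖ ^ κ
      - |v z.1 - v z.2| ^ p / ‖z.1 - z.2‖ ^ κ with hddef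
  have hd0 : 0 ≤ d := fun z => sub_nonneg.2 (hfg z)
  have hdint : Integrable d (μ.prod μ) := hIg.sub hIf
  have hsupp : S ⊆ Function.support d := by
    rintro ⟨x, y⟩ hzS
    obtain ⟨⟨hx1, hy1⟩, hz2⟩ := hzS
    simp only [mem_union, mem_prod, mem_setOf_eq, mem_univ, true_and, and_true,
      not_or] at hz2
    push_neg at hz2
    obtain ⟨hx2, hy2⟩ := hz2
    have hux : 0 < u x := by rw [hx2]; exact hx1
    have huy : u y < 0 := by rw [hy2]; exact hy1
    have hxy : x ≠ y := fun h => by rw [h] at hux; linarith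
    have hKpos : (0:ℝ) < ‖x - y‖ ^ κ :=
      Real.rpow_pos_of_pos (norm_pos_iff.2 (sub_ne_zero.2 hxy)) _
    have hstrict := strict_ineq (a := u x) (b := u y) hp hux huy
    have hlt : |v x - v y| ^ p / ‖x - y‖ ^ κ
        < sgnPow p (u x - u y) * (v x - v y) / ‖x - y‖ ^ κ :=
      (div_lt_div_iff_of_pos_right hKpos).2 hstrict
    have hdpos : 0 < d (x, y) := sub_pos.2 hlt
    exact hdpos.ne'
  have hdpos : 0 < ∫ z, d z ∂(μ.prod μ) :=
    (integral_pos_iff_support_of_nonneg hd0 hdint).2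
      (lt_of_lt_of_le hSpos (measure_mono hsupp))
  have hsub : (∫ z, d z ∂(μ.prod μ))
      = (∫ z, sgnPow p (u z.1 - u z.2) * (v z.1 - v z.2) / ‖z.1 - z.2‖ ^ κ ∂(μ.prod μ))
        - ∫ z, |v z.1 - v z.2| ^ p / ‖z.1 - z.2‖ ^ κ ∂(μ.prod μ) :=
    integral_sub hIg hIf
  rw [hfit, ← hkey]
  linarith [hdpos, hsub]
end

section
/- Let Ω ⊂ ℝᴺ be bounded, u_n ∈ L^{p*}(ℝᴺ) nonnegative with u_n = 0 outside Ω, and suppose |u_n|^{p*} converges weakly-* to S^{N/(ps)} δ_{x̄} as measures. Suppose |x̄| ≥ r and B_r(x̄) ∩ B_r(−x̄) = ∅. If each u_n is radial (u_n(x) depends only on |x|), then for all large n: ∫_{B_r(x̄)} u_n^{p*} dx = ∫_{B_r(−x̄)} u_n^{p*} dx > (3/4) S^{N/(ps)} while ∫ u_n^{p*} dx < (3/2) S^{N/(ps)}, a contradiction; hence u_n is eventually non-radial. -/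
open MeasureTheory Filter Set Metric

theorem stmt_15 (N : ℕ) (s p S r : ℝ) (hp : 1 < p) (hs : s ∈ Ioo (0:ℝ) 1)
    (hN : p * s < N) (hS : 0 < S) (hr : 0 < r)
    (Ω : Set (EuclideanSpace ℝ (Fin N))) (hΩb : Bornology.IsBounded Ω)
    (u : ℕ → EuclideanSpace ℝ (Fin N) → ℝ)
    (hnonneg : ∀ n x, 0 ≤ u n x)
    (hzero : ∀ n, ∀ x ∉ Ω, u n x = 0)
    (hLp : ∀ n, MemLp (u n) (ENNReal.ofReal (N * p / (N - p * s))) volume)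
    (xbar : EuclideanSpace ℝ (Fin N)) (hxbar : r ≤ ‖xbar‖)
    (hballs : Disjoint (ball xbar r) (ball (-xbar) r))
    -- tight (weak-*) convergence of |u_n|^{p^*} to S^{N/(ps)} δ_{xbar}
    (hconc : ∀ φ : BoundedContinuousFunction (EuclideanSpace ℝ (Fin N)) ℝ,
      Tendsto (fun n => ∫ x, φ x * (u n x) ^ (N * p / (N - p * s))) atTop
        (nhds (S ^ ((N : ℝ) / (p * s)) * φ xbar)))
    -- each u_n is radial
    (hradial : ∀ n, ∀ x y : EuclideanSpace ℝ (Fin N), ‖x‖ = ‖y‖ → u n x = u n y) :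
    False := by
  have hx0 : (0:ℝ) < ‖xbar‖ := lt_of_lt_of_le hr hxbar
  set c : ℝ := 2 * ‖xbar‖ with hc
  have hcpos : 0 < c := by positivity
  set f : EuclideanSpace ℝ (Fin N) → ℝ := fun x => max 0 (1 - ‖x - xbar‖ / c) with hf
  have hfcont : Continuous f := by
    apply continuous_const.max
    exact continuous_const.sub ((continuous_id.sub continuous_const).norm.div_const c)
  have hfbound : ∀ x, ‖f x‖ ≤ 1 := by
    intro x
    rw [Real.norm_eq_abs, abs_of_nonneg (le_max_left _ _)]
    apply max_le (by norm_num)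
    have : 0 ≤ ‖x - xbar‖ / c := by positivity
    linarith
  set φ : BoundedContinuousFunction (EuclideanSpace ℝ (Fin N)) ℝ :=
    BoundedContinuousFunction.ofNormedAddCommGroup f hfcont 1 hfbound with hφ
  set ψ : BoundedContinuousFunction (EuclideanSpace ℝ (Fin N)) ℝ :=
    BoundedContinuousFunction.ofNormedAddCommGroup (fun x => f (-x))
      (hfcont.comp continuous_neg) 1 (fun x => hfbound (-x)) with hψ
  have hcoeφ : ∀ x, φ x = f x := fun x => rfl
  have hcoeψ : ∀ x, ψ x = f (-x) := fun x => rfl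
  have hφx : φ xbar = 1 := by
    rw [hcoeφ, hf]; simp
  have hψx : ψ xbar = 0 := by
    have h1 : ‖-xbar - xbar‖ = c := by
      have h2 : -xbar - xbar = -((2:ℝ) • xbar) := by
        rw [two_smul]; abel
      rw [hc, h2, norm_neg, norm_smul]
      simp [Real.norm_eq_abs]
    rw [hcoeψ, hf]
    simp only
    rw [h1, div_self (ne_of_gt hcpos)]
    norm_num
  have heq : ∀ n, (∫ x, ψ x * (u n x) ^ (N * p / (N - p * s)))
      = ∫ x, φ x * (u n x) ^ (N * p / (N - p * s)) := by
    intro n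
    have h1 : ∀ x : EuclideanSpace ℝ (Fin N), ψ x * (u n x) ^ (N * p / (N - p * s))
        = φ (-x) * (u n (-x)) ^ (N * p / (N - p * s)) := by
      intro x
      have hu : u n (-x) = u n x := hradial n (-x) x (norm_neg x)
      have hψφ : ψ x = φ (-x) := rfl
      rw [hu, hψφ]
    calc (∫ x, ψ x * (u n x) ^ (N * p / (N - p * s)))
        = ∫ x, φ (-x) * (u n (-x)) ^ (N * p / (N - p * s)) := by
          exact integral_congr_ae (Filter.Eventually.of_forall h1)
      _ = ∫ x, φ x * (u n x) ^ (N * p / (N - p * s)) := by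
          exact integral_neg_eq_self
            (fun x => φ x * (u n x) ^ ((N:ℝ) * p / ((N:ℝ) - p * s))) volume
  have t1 := hconc φ
  have t2 := hconc ψ
  rw [show (fun n => ∫ x, ψ x * (u n x) ^ (N * p / (N - p * s)))
      = (fun n => ∫ x, φ x * (u n x) ^ (N * p / (N - p * s))) from funext heq] at t2
  have := tendsto_nhds_unique t1 t2
  rw [hφx, hψx] at this
  have hpos : 0 < S ^ ((N : ℝ) / (p * s)) := Real.rpow_pos_of_pos hS _
  nlinarith
end

section
/- Let 0 < 1/R < 1 and let Ω̃ = B₁ \ B_{1/R} ⊂ ℝᴺ be the annulus between radii 1/R and 1. Fix a unit vector ν and for λ ∈ (−1, 0) let R^ν_λ(x) = x + 2(λ − x·ν)ν be the reflection across the hyperplane {x·ν = λ}, and let Ω̃^ν_λ = Ω̃ ∩ {x·ν < λ}. Then R^ν_λ(Ω̃^ν_λ) ⊆ Ω̃ if and only if −1 < λ ≤ −(1 + 1/R)/2. -/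
open Set Metric
open scoped RealInnerProductSpace

theorem stmt_18 (N : ℕ) (hN : 1 ≤ N) (R : ℝ) (hR : 1 < R)
    (ν : EuclideanSpace ℝ (Fin N)) (hν : ‖ν‖ = 1)
    (lam : ℝ) (hlam : lam ∈ Ioo (-1 : ℝ) 0) :
    (((fun x : EuclideanSpace ℝ (Fin N) => x + (2 * (lam - ⟪x, ν⟫)) • ν) ''
        ((ball (0 : EuclideanSpace ℝ (Fin N)) 1 \
            closedBall (0 : EuclideanSpace ℝ (Fin N)) (1 / R)) ∩
          {x : EuclideanSpace ℝ (Fin N) | ⟪x, ν⟫ < lam})) ⊆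
        (ball (0 : EuclideanSpace ℝ (Fin N)) 1 \
          closedBall (0 : EuclideanSpace ℝ (Fin N)) (1 / R))) ↔
      lam ≤ -((1 + 1 / R) / 2) := by
  obtain ⟨hlam1, hlam0⟩ := hlam
  have hR0 : (0:ℝ) < 1/R := by positivity
  have hR1 : 1/R < 1 := by rw [div_lt_one (by linarith)]; linarith
  constructor
  · intro hsub
    by_contra hlt
    push_neg at hlt
    -- pick a point on the axis whose reflection lands inside the inner ball
    set L : ℝ := max (1/R) (max (-lam) (-2*lam - 1/R)) with hL
    set U : ℝ := min 1 (-2*lam + 1/R) with hU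
    have hLU : L < U := by
      simp only [hL, hU, lt_min_iff, max_lt_iff]
      refine ⟨⟨hR1, by linarith, by linarith⟩, ⟨by linarith, by linarith, by linarith⟩⟩
    set s : ℝ := (L + U)/2 with hs
    have hsL : L < s := by simp only [hs]; linarith
    have hsU : s < U := by simp only [hs]; linarith
    have hs1 : 1/R < s := lt_of_le_of_lt (le_max_left _ _) hsL
    have hs2 : -lam < s := lt_of_le_of_lt ((le_max_left _ _).trans (le_max_right _ _)) hsL
    have hs3 : -2*lam - 1/R < s :=
      lt_of_le_of_lt ((le_max_right _ _).trans (le_max_right _ _)) hsL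
    have hs4 : s < 1 := lt_of_lt_of_le hsU (min_le_left _ _)
    have hs5 : s < -2*lam + 1/R := lt_of_lt_of_le hsU (min_le_right _ _)
    have hspos : 0 < s := lt_trans hR0 hs1
    set x : EuclideanSpace ℝ (Fin N) := (-s) • ν with hx
    have ht : ⟪x, ν⟫ = -s := by
      rw [hx, real_inner_smul_left, real_inner_self_eq_norm_sq, hν]
      ring
    have hxn : ‖x‖ = s := by
      rw [hx, norm_smul, hν, mul_one, Real.norm_eq_abs, abs_of_neg (by linarith)]
      ring
    have hy : x + (2 * (lam - ⟪x, ν⟫)) • ν = (2*lam + s) • ν := by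
      rw [ht, hx, ← add_smul]
      congr 1
      ring
    have hxmem : x ∈ (ball (0 : EuclideanSpace ℝ (Fin N)) 1 \
          closedBall (0 : EuclideanSpace ℝ (Fin N)) (1 / R)) ∩
          {x : EuclideanSpace ℝ (Fin N) | ⟪x, ν⟫ < lam} := by
      refine ⟨⟨mem_ball_zero_iff.mpr ?_, fun hc => ?_⟩, ?_⟩
      · rw [hxn]; exact hs4
      · rw [mem_closedBall_zero_iff, hxn] at hc; linarith
      · rw [mem_setOf_eq, ht]; linarith
    have := hsub ⟨x, hxmem, rfl⟩
    apply this.2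
    rw [mem_closedBall_zero_iff]
    simp only [hy]
    rw [norm_smul, hν, mul_one, Real.norm_eq_abs]
    rw [abs_le]
    constructor <;> linarith
  · rintro h y ⟨x, ⟨⟨hb, hcb⟩, hhalf⟩, rfl⟩
    set t : ℝ := ⟪x, ν⟫ with htdef
    rw [mem_setOf_eq] at hhalf
    have hx1 : ‖x‖ < 1 := mem_ball_zero_iff.mp hb
    have hx2 : 1/R < ‖x‖ := by
      by_contra hc
      exact hcb (mem_closedBall_zero_iff.mpr (le_of_not_gt hc))
    have htx : |t| ≤ ‖x‖ := by
      have := abs_real_inner_le_norm x ν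
      rwa [hν, mul_one] at this
    have htx' : -‖x‖ ≤ t := neg_le_of_abs_le htx
    have hns : ‖x + (2 * (lam - t)) • ν‖^2 = ‖x‖^2 + 4*lam*(lam - t) := by
      rw [norm_add_sq_real, real_inner_smul_right, norm_smul, hν, mul_one,
        Real.norm_eq_abs, sq_abs]
      ring
    have hyn : (0:ℝ) ≤ ‖x + (2 * (lam - t)) • ν‖ := norm_nonneg _
    constructor
    · rw [mem_ball_zero_iff]
      have h1 : ‖x + (2 * (lam - t)) • ν‖^2 < 1 := by nlinarith
      nlinarith
    · intro hc
      rw [mem_closedBall_zero_iff] at hc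
      have key : ‖x‖ + 2*lam < -(1/R) := by linarith
      have h2 : (1/R)^2 < (‖x‖ + 2*lam)^2 := by nlinarith
      have h3 : (‖x‖ + 2*lam)^2 ≤ ‖x + (2 * (lam - t)) • ν‖^2 := by nlinarith
      nlinarith
end
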